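/- For all 2×2 complex matrices A and B, the partial trace over H₂ of the block operator R(A,B) satisfies (I₄ − Tr₂(R(A,B))) is PSD if and only if (I₂ − A − B) is PSD. (Lemma 3 of the paper, Appendix A.) -/
import Mathlib


open Matrix Kronecker Complex Filter
open scoped ComplexOrder

noncomputable section

/-- Partial trace over the third (output) factor `H₂`. -/
def ptr2 (R : Matrix (Fin 2 × Fin 2 × Fin 2) (Fin 2 × Fin 2 × Fin 2) ℂ) :
    Matrix (Fin 2 × Fin 2) (Fin 2 × Fin 2) ℂ :=
  Matrix.of fun p q => ∑ k : Fin 2, R (p.1, p.2, k) (q.1, q.2, k)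

/-- Tensor product of a vector in `ℂ²` with a vector in `ℂ^{Fin 2 × Fin 2}`. -/
def tv (v : Fin 2 → ℂ) (w : Fin 2 × Fin 2 → ℂ) : Fin 2 × Fin 2 × Fin 2 → ℂ :=
  fun p => v p.1 * w p.2

/-- `|+⟩ = (1,1)/√2`. -/
def plusV : Fin 2 → ℂ := ((Real.sqrt 2 : ℂ))⁻¹ • ![1, 1]

/-- `|−⟩ = (1,−1)/√2`. -/
def minusV : Fin 2 → ℂ := ((Real.sqrt 2 : ℂ))⁻¹ • ![1, -1]

/-- `|I⟩⟩ = (1,0,0,1)`. -/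
def Iket : Fin 2 × Fin 2 → ℂ := fun p =>
  if p = (0, 0) then 1 else if p = (1, 1) then 1 else 0

/-- `|σz⟩⟩ = (1,0,0,−1)`. -/
def Zket : Fin 2 × Fin 2 → ℂ := fun p =>
  if p = (0, 0) then 1 else if p = (1, 1) then -1 else 0

/-- `e₁ = |+⟩⊗|I⟩⟩`, `e₂ = |−⟩⊗|σz⟩⟩`. -/
def eV (i : Fin 2) : Fin 2 × Fin 2 × Fin 2 → ℂ :=
  if i = 0 then tv plusV Iket else tv minusV Zket

/-- `e₁′ = |+⟩⊗|σz⟩⟩`, `e₂′ = |−⟩⊗|I⟩⟩`. -/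
def eV' (i : Fin 2) : Fin 2 × Fin 2 × Fin 2 → ℂ :=
  if i = 0 then tv plusV Zket else tv minusV Iket

/-- The block operator `R(A,B) = ∑ᵢⱼ Aᵢⱼ eᵢeⱼᴴ + ∑ᵢⱼ Bᵢⱼ eᵢ′(eⱼ′)ᴴ`. -/
def Rop (A B : Matrix (Fin 2) (Fin 2) ℂ) :
    Matrix (Fin 2 × Fin 2 × Fin 2) (Fin 2 × Fin 2 × Fin 2) ℂ :=
  (∑ i : Fin 2, ∑ j : Fin 2, A i j • Matrix.vecMulVec (eV i) (star (eV j)))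
  + (∑ i : Fin 2, ∑ j : Fin 2, B i j • Matrix.vecMulVec (eV' i) (star (eV' j)))


def Vmat (c : Fin 2) : Matrix (Fin 2 × Fin 2) (Fin 2) ℂ :=
  Matrix.of fun p i =>
    (if i = 0 then plusV else minusV) p.1 *
      (if p.2 = c then (if i = 1 ∧ c = 1 then -1 else 1) else 0)

lemma hs2 : ((Real.sqrt 2 : ℂ))⁻¹ * ((Real.sqrt 2 : ℂ))⁻¹ = 2⁻¹ := by
  rw [← mul_inv]; norm_cast; rw [Real.mul_self_sqrt (by norm_num)]; push_cast; ring

lemma hs2' : ((Real.sqrt 2 : ℂ))⁻¹ ^ 2 = 2⁻¹ := by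
  rw [sq]; exact hs2

lemma VhV (c d : Fin 2) : (Vmat c)ᴴ * (Vmat d) = if c = d then 1 else 0 := by
  ext i j
  fin_cases c <;> fin_cases d <;> fin_cases i <;> fin_cases j <;>
    simp [Vmat, plusV, minusV, mul_apply, Fintype.sum_prod_type, Fin.sum_univ_two,
      conjTranspose_apply, hs2] <;> norm_num

set_option maxHeartbeats 2000000 in
lemma key1 (A B : Matrix (Fin 2) (Fin 2) ℂ) :
    ptr2 (Rop A B) = Vmat 0 * (A + B) * (Vmat 0)ᴴ + Vmat 1 * (A + B) * (Vmat 1)ᴴ := by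
  ext ⟨a, b⟩ ⟨c, d⟩
  fin_cases a <;> fin_cases b <;> fin_cases c <;> fin_cases d <;>
    simp [ptr2, Rop, Vmat, eV, eV', tv, plusV, minusV, Iket, Zket, mul_apply,
      vecMulVec_apply, Fin.sum_univ_two, conjTranspose_apply, Prod.ext_iff,
      Complex.conj_ofReal] <;>
    ring_nf <;> simp [hs2', hs2] <;> ring_nf

lemma VVh : Vmat 0 * (Vmat 0)ᴴ + Vmat 1 * (Vmat 1)ᴴ = 1 := by
  ext ⟨a, b⟩ ⟨c, d⟩
  fin_cases a <;> fin_cases b <;> fin_cases c <;> fin_cases d <;>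
    simp [Vmat, plusV, minusV, mul_apply, Fin.sum_univ_two, conjTranspose_apply,
      Complex.conj_ofReal, hs2, Matrix.one_apply, Prod.ext_iff] <;> norm_num

lemma pick (X : Matrix (Fin 2) (Fin 2) ℂ) :
    (Vmat 0)ᴴ * (Vmat 0 * X * (Vmat 0)ᴴ + Vmat 1 * X * (Vmat 1)ᴴ) * Vmat 0 = X := by
  have h00 : (Vmat 0)ᴴ * Vmat 0 = 1 := by simpa using VhV 0 0
  have h01 : (Vmat 0)ᴴ * Vmat 1 = 0 := by simpa using VhV 0 1
  simp only [Matrix.add_mul, Matrix.mul_add, ← Matrix.mul_assoc, h00, h01]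
  simp [Matrix.mul_assoc, h00]

theorem partial_trace_normalization_iff (A B : Matrix (Fin 2) (Fin 2) ℂ) :
    (1 - ptr2 (Rop A B)).PosSemidef ↔ (1 - A - B).PosSemidef := by
  have key : 1 - ptr2 (Rop A B) =
      Vmat 0 * (1 - (A + B)) * (Vmat 0)ᴴ + Vmat 1 * (1 - (A + B)) * (Vmat 1)ᴴ := by
    rw [key1]
    nth_rewrite 1 [← VVh]
    simp only [Matrix.mul_sub, Matrix.sub_mul, Matrix.mul_one]
    abel
  rw [sub_sub]
  constructor
  · intro h
    have h2 : 1 - (A + B) = (Vmat 0)ᴴ * (1 - ptr2 (Rop A B)) * Vmat 0 := by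
      rw [key, pick]
    rw [h2]
    exact h.conjTranspose_mul_mul_same _
  · intro h
    rw [key]
    exact (h.mul_mul_conjTranspose_same _).add (h.mul_mul_conjTranspose_same _)
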